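/- For q = 4 and n ≥ 2, the number of sequences in {0,1,2,3}^n with minimum entry 0, positive maximum, and gcd of entries 1 equals 4^n − 3^n − 2^{n+1} + 3. -/

import Mathlib

section helpers
open Finset

lemma count_pi (n : ℕ) (p : Fin 4 → Prop) [DecidablePred p] :
    (Finset.univ.filter (fun y : Fin n → Fin 4 => ∀ i, p (y i))).card
      = (Finset.univ.filter p).card ^ n := by
  rw [← Fintype.card_subtype, ← Fintype.card_subtype,
    Fintype.card_congr (Equiv.subtypePiEquivPi (p := fun _ : Fin n => p))]
  simp [Fintype.card_pi]

lemma gcd_char (n : ℕ) (y : Fin n → Fin 4) (h1 : ∃ i, y i ≠ 0) :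
    Finset.univ.gcd (fun i => ((y i : ℕ))) = 1 ↔
      ¬(∀ i, y i = 0 ∨ y i = 2) ∧ ¬(∀ i, y i = 0 ∨ y i = 3) := by
  constructor
  · intro hg
    constructor
    · intro h
      have h2 : (2 : ℕ) ∣ Finset.univ.gcd (fun i => ((y i : ℕ))) := by
        refine Finset.dvd_gcd fun i _ => ?_
        have : ∀ z : Fin 4, (z = 0 ∨ z = 2) → 2 ∣ (z : ℕ) := by decide
        exact this _ (h i)
      rw [hg] at h2; omega
    · intro h
      have h2 : (3 : ℕ) ∣ Finset.univ.gcd (fun i => ((y i : ℕ))) := by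
        refine Finset.dvd_gcd fun i _ => ?_
        have : ∀ z : Fin 4, (z = 0 ∨ z = 3) → 3 ∣ (z : ℕ) := by decide
        exact this _ (h i)
      rw [hg] at h2; omega
  · rintro ⟨ha, hb⟩
    obtain ⟨i1, hi1⟩ := h1
    set d := Finset.univ.gcd (fun i => ((y i : ℕ))) with hd
    have hdvd : ∀ i, d ∣ (y i : ℕ) := fun i =>
      Finset.gcd_dvd (Finset.mem_univ i)
    have hm : (y i1 : ℕ) ≠ 0 := by
      exact fun h => hi1 (Fin.ext (h.trans rfl))
    have hle : (y i1 : ℕ) ≤ 3 := by omega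
    have hdle : d ≤ 3 := le_trans (Nat.le_of_dvd (Nat.pos_of_ne_zero hm) (hdvd i1)) hle
    have hdpos : 0 < d := Nat.pos_of_ne_zero fun h0 => hm (by
      have := hdvd i1; rw [h0] at this; exact Nat.eq_zero_of_zero_dvd this)
    interval_cases d
    · rfl
    · exact absurd (fun i => by
        have : ∀ z : Fin 4, 2 ∣ (z : ℕ) → (z = 0 ∨ z = 2) := by decide
        exact this _ (hdvd i)) ha
    · exact absurd (fun i => by
        have : ∀ z : Fin 4, 3 ∣ (z : ℕ) → (z = 0 ∨ z = 3) := by decide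
        exact this _ (hdvd i)) hb

end helpers

theorem stmt_19 (n : ℕ) (hn : 2 ≤ n) :
    ((Set.ncard {x : Fin n → ℕ |
        (∀ i, x i ≤ 3) ∧ (∃ i, x i = 0) ∧ (∃ i, 0 < x i) ∧
        Finset.univ.gcd x = 1} : ℤ)
      = 4 ^ n - 3 ^ n - 2 ^ (n + 1) + 3) := by
  classical
  set f : (Fin n → Fin 4) → (Fin n → ℕ) := fun y i => (y i : ℕ) with hf
  have hfinj : Function.Injective f := fun a b h =>
    funext fun i => Fin.val_injective (congrFun h i)
  set P : (Fin n → Fin 4) → Prop := fun y =>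
    (∃ i, y i = 0) ∧ (∃ i, y i ≠ 0) ∧
      Finset.univ.gcd (fun i => ((y i : ℕ))) = 1 with hP
  have hS : {x : Fin n → ℕ |
        (∀ i, x i ≤ 3) ∧ (∃ i, x i = 0) ∧ (∃ i, 0 < x i) ∧
        Finset.univ.gcd x = 1} = f '' {y | P y} := by
    ext x
    constructor
    · rintro ⟨hle, ⟨i0, hi0⟩, ⟨i1, hi1⟩, hg⟩
      refine ⟨fun i => ⟨x i, by have := hle i; omega⟩, ⟨⟨i0, by simp [Fin.ext_iff, hi0]⟩,
        ⟨i1, by simp [Fin.ext_iff]; omega⟩, ?_⟩, rfl⟩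
      simpa using hg
    · rintro ⟨y, ⟨⟨i0, hi0⟩, ⟨i1, hi1⟩, hg⟩, rfl⟩
      refine ⟨fun i => by have := (y i).isLt; simp [hf]; omega,
        ⟨i0, by simp [hf, hi0]⟩, ⟨i1, ?_⟩, hg⟩
      have : (y i1 : ℕ) ≠ 0 := by exact fun h => hi1 (Fin.ext (h.trans rfl))
      simp [hf]; omega
  rw [hS, Set.ncard_image_of_injective _ hfinj, Set.ncard_eq_toFinset_card']
  have htf : {y | P y}.toFinset = Finset.univ.filter P := by
    ext y; simp
  rw [htf]
  -- the four pieces of the complement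
  set B := Finset.univ.filter (fun y : Fin n → Fin 4 => ∀ i, y i ≠ 0) with hB
  set C := Finset.univ.filter (fun y : Fin n → Fin 4 => ∀ i, y i = 0) with hC
  set D2 := Finset.univ.filter (fun y : Fin n → Fin 4 => ∀ i, y i = 0 ∨ y i = 2) with hD2
  set E2 := Finset.univ.filter (fun y : Fin n → Fin 4 => ∀ i, y i = 0 ∨ y i = 3) with hE2
  set D := D2.filter (fun y => (∃ i, y i = 0) ∧ (∃ i, y i ≠ 0)) with hD
  set E := E2.filter (fun y => (∃ i, y i = 0) ∧ (∃ i, y i ≠ 0)) with hE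
  have hcB : B.card = 3 ^ n := by
    rw [hB, count_pi n (fun z : Fin 4 => z ≠ 0)]; norm_num [Finset.filter_ne']
  have hcC : C.card = 1 := by
    rw [hC, count_pi n (fun z : Fin 4 => z = 0)]
    rw [show (Finset.univ.filter (fun z : Fin 4 => z = 0)).card = 1 from by decide]
    exact one_pow n
  have hcD2 : D2.card = 2 ^ n := by
    rw [hD2, count_pi n (fun z : Fin 4 => z = 0 ∨ z = 2)]
    rw [show (Finset.univ.filter (fun z : Fin 4 => z = 0 ∨ z = 2)).card = 2 from by decide]
  have hcE2 : E2.card = 2 ^ n := by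
    rw [hE2, count_pi n (fun z : Fin 4 => z = 0 ∨ z = 3)]
    rw [show (Finset.univ.filter (fun z : Fin 4 => z = 0 ∨ z = 3)).card = 2 from by decide]
  have hne : (fun _ : Fin n => (0 : Fin 4)) ≠ (fun _ : Fin n => (2 : Fin 4)) := by
    intro h
    have := congrFun h ⟨0, by omega⟩
    simp at this
  have hne3 : (fun _ : Fin n => (0 : Fin 4)) ≠ (fun _ : Fin n => (3 : Fin 4)) := by
    intro h
    have := congrFun h ⟨0, by omega⟩
    simp at this
  have hcD : D.card + 2 = 2 ^ n := by
    have hsp := Finset.card_filter_add_card_filter_not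
      (s := D2) (p := fun y => (∃ i, y i = 0) ∧ (∃ i, y i ≠ 0))
    have hrest : D2.filter (fun y => ¬((∃ i, y i = 0) ∧ (∃ i, y i ≠ 0)))
        = {fun _ => (0 : Fin 4), fun _ => (2 : Fin 4)} := by
      ext y
      simp only [Finset.mem_filter, hD2, Finset.mem_univ, true_and,
        Finset.mem_insert, Finset.mem_singleton, not_and_or, not_exists, not_not]
      constructor
      · rintro ⟨hall, h | h⟩
        · right; funext i; rcases hall i with h0 | h2
          · exact absurd h0 (h i)
          · exact h2
        · left; funext i; exact h i
      · rintro (rfl | rfl)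
        · exact ⟨fun i => Or.inl rfl, Or.inr fun i => rfl⟩
        · exact ⟨fun i => Or.inr rfl, Or.inl fun i => by simp⟩
    rw [hrest] at hsp
    rw [Finset.card_insert_of_notMem (by simp [hne]), Finset.card_singleton] at hsp
    rw [← hcD2]; exact hsp
  have hcE : E.card + 2 = 2 ^ n := by
    have hsp := Finset.card_filter_add_card_filter_not
      (s := E2) (p := fun y => (∃ i, y i = 0) ∧ (∃ i, y i ≠ 0))
    have hrest : E2.filter (fun y => ¬((∃ i, y i = 0) ∧ (∃ i, y i ≠ 0)))
        = {fun _ => (0 : Fin 4), fun _ => (3 : Fin 4)} := by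
      ext y
      simp only [Finset.mem_filter, hE2, Finset.mem_univ, true_and,
        Finset.mem_insert, Finset.mem_singleton, not_and_or, not_exists, not_not]
      constructor
      · rintro ⟨hall, h | h⟩
        · right; funext i; rcases hall i with h0 | h2
          · exact absurd h0 (h i)
          · exact h2
        · left; funext i; exact h i
      · rintro (rfl | rfl)
        · exact ⟨fun i => Or.inl rfl, Or.inr fun i => rfl⟩
        · exact ⟨fun i => Or.inr rfl, Or.inl fun i => by simp⟩
    rw [hrest] at hsp
    rw [Finset.card_insert_of_notMem (by simp [hne3]), Finset.card_singleton] at hsp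
    rw [← hcE2]; exact hsp
  -- the complement of P is B ∪ C ∪ D ∪ E
  have hcompl : Finset.univ.filter (fun y => ¬ P y) = B ∪ C ∪ D ∪ E := by
    ext y
    simp only [Finset.mem_filter, Finset.mem_univ, true_and, Finset.mem_union,
      hB, hC, hD, hD2, hE, hE2, hP]
    by_cases h1 : ∃ i, y i ≠ 0
    · by_cases h0 : ∃ i, y i = 0
      · have hg := gcd_char n y h1
        have hB' : ¬ ∀ i, y i ≠ 0 := by
          obtain ⟨i, hi⟩ := h0; intro h; exact h i hi
        have hC' : ¬ ∀ i, y i = 0 := by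
          obtain ⟨i, hi⟩ := h1; intro h; exact hi (h i)
        constructor
        · intro h
          have hng : ¬ Finset.univ.gcd (fun i => ((y i : ℕ))) = 1 :=
            fun hgc => h ⟨h0, h1, hgc⟩
          rw [hg, not_and_or, not_not, not_not] at hng
          rcases hng with hA | hA
          · exact Or.inl (Or.inr ⟨hA, h0, h1⟩)
          · exact Or.inr ⟨hA, h0, h1⟩
        · rintro (((h | h) | ⟨hA, -, -⟩) | ⟨hA, -, -⟩) ⟨hz, hnz, hgc⟩
          · exact hB' h
          · exact hC' h
          · exact (hg.1 hgc).1 hA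
          · exact (hg.1 hgc).2 hA
      · have h0' : ∀ i, y i ≠ 0 := by push_neg at h0; exact h0
        constructor
        · intro _; exact Or.inl (Or.inl (Or.inl h0'))
        · rintro (((h | h) | ⟨-, ⟨i, hi⟩, -⟩) | ⟨-, ⟨i, hi⟩, -⟩) ⟨hz, hnz, hgc⟩
          · obtain ⟨i, hi⟩ := hz; exact h0' i hi
          · obtain ⟨i, hi⟩ := hz; exact h0' i hi
          · obtain ⟨j, hj⟩ := hz; exact h0' j hj
          · obtain ⟨j, hj⟩ := hz; exact h0' j hj
    · have h1' : ∀ i, y i = 0 := by push_neg at h1; exact h1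
      constructor
      · intro _; exact Or.inl (Or.inl (Or.inr h1'))
      · rintro - ⟨-, ⟨i, hi⟩, -⟩; exact hi (h1' i)
  -- disjointness
  have dBC : Disjoint B C := Finset.disjoint_left.2 fun y hy hy' => by
    simp only [hB, hC, Finset.mem_filter, Finset.mem_univ, true_and] at hy hy'
    exact hy ⟨0, by omega⟩ (hy' ⟨0, by omega⟩)
  have dBD : Disjoint B D := Finset.disjoint_left.2 fun y hy hy' => by
    simp only [hB, hD, hD2, Finset.mem_filter, Finset.mem_univ, true_and] at hy hy'
    obtain ⟨i, hi⟩ := hy'.2.1; exact hy i hi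
  have dBE : Disjoint B E := Finset.disjoint_left.2 fun y hy hy' => by
    simp only [hB, hE, hE2, Finset.mem_filter, Finset.mem_univ, true_and] at hy hy'
    obtain ⟨i, hi⟩ := hy'.2.1; exact hy i hi
  have dCD : Disjoint C D := Finset.disjoint_left.2 fun y hy hy' => by
    simp only [hC, hD, hD2, Finset.mem_filter, Finset.mem_univ, true_and] at hy hy'
    obtain ⟨i, hi⟩ := hy'.2.2; exact hi (hy i)
  have dCE : Disjoint C E := Finset.disjoint_left.2 fun y hy hy' => by
    simp only [hC, hE, hE2, Finset.mem_filter, Finset.mem_univ, true_and] at hy hy'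
    obtain ⟨i, hi⟩ := hy'.2.2; exact hi (hy i)
  have dDE : Disjoint D E := Finset.disjoint_left.2 fun y hy hy' => by
    simp only [hD, hD2, hE, hE2, Finset.mem_filter, Finset.mem_univ, true_and] at hy hy'
    obtain ⟨i, hi⟩ := hy.2.2
    rcases hy.1 i with h | h
    · exact hi h
    · rcases hy'.1 i with h' | h'
      · exact hi h'
      · rw [h] at h'; simp at h'
  have hcardunion : (B ∪ C ∪ D ∪ E).card = B.card + C.card + D.card + E.card := by
    rw [Finset.card_union_of_disjoint (by
        exact Finset.disjoint_union_left.2 ⟨Finset.disjoint_union_left.2 ⟨dBE, dCE⟩, dDE⟩),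
      Finset.card_union_of_disjoint (Finset.disjoint_union_left.2 ⟨dBD, dCD⟩),
      Finset.card_union_of_disjoint dBC]
  have hsplit := Finset.card_filter_add_card_filter_not (s := Finset.univ) (p := P)
  rw [hcompl, hcardunion, Finset.card_univ] at hsplit
  have hcu : Fintype.card (Fin n → Fin 4) = 4 ^ n := by
    simp [Fintype.card_fun]
  rw [hcu, hcB, hcC] at hsplit
  -- final arithmetic over ℤ
  have e1 := congrArg (Nat.cast (R := ℤ)) hsplit
  have e2 := congrArg (Nat.cast (R := ℤ)) hcD
  have e3 := congrArg (Nat.cast (R := ℤ)) hcE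
  push_cast at e1 e2 e3
  have hp : (2 : ℤ) ^ (n + 1) = 2 * 2 ^ n := by ring
  rw [hp]
  linarith
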